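/- arXiv:2111.13240 — 2 statements merged into one kernel-verified Lean document; each statement's English description precedes it below -/
import Mathlib

section
/- Let G be a weighted digraph, let S ⊆ V be a set of vertices, and let H = {(x,y) : x, y ∈ S, x ≠ y, y reachable from x in G}, with each edge (x,y) ∈ H weighted dist_G(x,y). For any vertices u, v, let P be a shortest u-v path in G ∪ H that has the minimum number of edges among all shortest u-v paths in G ∪ H. Then P contains at most 2 vertices of S. -/
namespace Paper

variable {V : Type*}

/-- `IsWalk E u v l` : `l` is the list of vertices visited after `u` on a
directed walk from `u` to `v` in the digraph with edge relation `E`.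
The number of edges of the walk is `l.length`. -/
def IsWalk (E : V → V → Prop) : V → V → List V → Prop
  | u, v, [] => u = v
  | u, v, x :: xs => E u x ∧ IsWalk E x v xs

/-- `v` is reachable from `u` by a directed walk (possibly trivial). -/
def Reach (E : V → V → Prop) (u v : V) : Prop := ∃ l, IsWalk E u v l

/-- The transitive closure `G*`: pairs `(u,v)` with `u ≠ v` and `v` reachable from `u`. -/
def TC (E : V → V → Prop) (u v : V) : Prop := u ≠ v ∧ Reach E u v

/-- `dist E u v` : minimum number of edges on a directed walk from `u` to `v`. -/
noncomputable def dist (E : V → V → Prop) (u v : V) : ℕ :=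
  sInf {k | ∃ l, IsWalk E u v l ∧ l.length = k}

/-- The digraph `G ∪ H` obtained by adding the edge set `H` to `E`. -/
def addE (E : V → V → Prop) (H : Finset (V × V)) : V → V → Prop :=
  fun a b => E a b ∨ (a, b) ∈ H


/-- `wlen w u l` : total weight of the walk starting at `u` visiting the vertices of
`l` in order, with edge-weight function `w`. -/
def wlen (w : V → V → ℝ) : V → List V → ℝ
  | _, [] => 0
  | u, x :: xs => w u x + wlen w x xs

/-- `wdist E w u v` : the weighted distance from `u` to `v`, the infimum of the
weights of all directed `u`-`v` walks. -/
noncomputable def wdist (E : V → V → Prop) (w : V → V → ℝ) (u v : V) : ℝ :=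
  sInf {r | ∃ l, IsWalk E u v l ∧ wlen w u l = r}

/-- The weights are integers in `[1, W]`. -/
def IntWeights (E : V → V → Prop) (w : V → V → ℝ) (W : ℕ) : Prop :=
  ∀ u v : V, E u v → ∃ m : ℕ, 1 ≤ m ∧ m ≤ W ∧ w u v = (m : ℝ)

/-- The weight function of `G ∪ H`, where each hopset edge `(u,v) ∈ H` is weighted by
`dist_G(u,v)`. -/
noncomputable def hopW [DecidableEq V] (E : V → V → Prop) (w : V → V → ℝ)
    (H : Finset (V × V)) : V → V → ℝ :=
  fun a b => if (a, b) ∈ H then wdist E w a b else w a b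

/-- `H` is a `(β,ε)`-hopset for the weighted digraph `(E,w)`: a set of edges of the
transitive closure, each `(u,v)` weighted `dist_G(u,v)`, such that for every pair
`u,v` with `v` reachable from `u`, no walk in `G ∪ H` is shorter than `dist_G(u,v)`,
and some walk in `G ∪ H` with at most `β` hops has weight at most
`(1+ε)·dist_G(u,v)`. -/
def IsHopset [DecidableEq V] (E : V → V → Prop) (w : V → V → ℝ)
    (β : ℕ) (ε : ℝ) (H : Finset (V × V)) : Prop :=
  (∀ e ∈ H, TC E e.1 e.2) ∧
  ∀ u v : V, TC E u v →
    (∀ l, IsWalk (addE E H) u v l → l.length ≤ β →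
      wdist E w u v ≤ wlen (hopW E w H) u l) ∧
    (∃ l, IsWalk (addE E H) u v l ∧ l.length ≤ β ∧
      wlen (hopW E w H) u l ≤ (1 + ε) * wdist E w u v)

open Classical

section Aux

lemma isWalk_append {E : V → V → Prop} :
    ∀ (l1 : List V) {u m v : V} {l2 : List V},
      IsWalk E u m l1 → IsWalk E m v l2 → IsWalk E u v (l1 ++ l2) := by
  intro l1
  induction l1 with
  | nil =>
    intro u m v l2 h1 h2
    have : u = m := h1
    subst this
    simpa using h2
  | cons x xs ih =>
    intro u m v l2 h1 h2
    exact ⟨h1.1, ih h1.2 h2⟩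

lemma isWalk_split {E : V → V → Prop} :
    ∀ (l1 : List V) {u m v : V} {l2 : List V},
      IsWalk E u v (l1 ++ m :: l2) → IsWalk E u m (l1 ++ [m]) ∧ IsWalk E m v l2 := by
  intro l1
  induction l1 with
  | nil =>
    intro u m v l2 h
    exact ⟨⟨h.1, rfl⟩, h.2⟩
  | cons x xs ih =>
    intro u m v l2 h
    obtain ⟨h1, h2⟩ := ih h.2
    exact ⟨⟨h.1, h1⟩, h2⟩

lemma wlen_split (w : V → V → ℝ) :
    ∀ (l1 : List V) (u m : V) (l2 : List V),
      wlen w u (l1 ++ m :: l2) = wlen w u (l1 ++ [m]) + wlen w m l2 := by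
  intro l1
  induction l1 with
  | nil =>
    intro u m l2
    show w u m + wlen w m l2 = (w u m + 0) + wlen w m l2
    ring
  | cons x xs ih =>
    intro u m l2
    show w u x + wlen w x (xs ++ m :: l2) = w u x + wlen w x (xs ++ [m]) + wlen w m l2
    rw [ih]
    ring

lemma wlen_nonneg {E : V → V → Prop} {w : V → V → ℝ}
    (hw : ∀ a b, E a b → 0 ≤ w a b) :
    ∀ (l : List V) (u v : V), IsWalk E u v l → 0 ≤ wlen w u l := by
  intro l
  induction l with
  | nil => intro u v _; simp [wlen]
  | cons x xs ih =>
    intro u v h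
    have h1 := hw u x h.1
    have h2 := ih x v h.2
    simp only [wlen]
    linarith

lemma wdist_bddBelow {E : V → V → Prop} {w : V → V → ℝ}
    (hw : ∀ a b, E a b → 0 ≤ w a b) (u v : V) :
    BddBelow {r | ∃ l, IsWalk E u v l ∧ wlen w u l = r} := by
  refine ⟨0, ?_⟩
  rintro r ⟨l, hl, rfl⟩
  exact wlen_nonneg hw l u v hl

lemma wdist_le {E : V → V → Prop} {w : V → V → ℝ}
    (hw : ∀ a b, E a b → 0 ≤ w a b) {u v : V} {l : List V}
    (h : IsWalk E u v l) : wdist E w u v ≤ wlen w u l :=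
  csInf_le (wdist_bddBelow hw u v) ⟨l, h, rfl⟩

lemma wdist_nonneg {E : V → V → Prop} {w : V → V → ℝ}
    (hw : ∀ a b, E a b → 0 ≤ w a b) (u v : V) :
    0 ≤ wdist E w u v := by
  apply Real.sInf_nonneg
  rintro r ⟨l, hl, rfl⟩
  exact wlen_nonneg hw l u v hl

lemma isWalk_last {E : V → V → Prop} :
    ∀ (l : List V) (u v : V), IsWalk E u v l →
      (l = [] ∧ u = v) ∨ ∃ t, l = t ++ [v] := by
  intro l
  induction l with
  | nil => intro u v h; exact Or.inl ⟨rfl, h⟩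
  | cons x xs ih =>
    intro u v h
    rcases ih x v h.2 with ⟨rfl, rfl⟩ | ⟨t, rfl⟩
    · exact Or.inr ⟨[], rfl⟩
    · exact Or.inr ⟨x :: t, rfl⟩

lemma walk_reach {E E' : V → V → Prop} (hR : ∀ a b, E' a b → Reach E a b) :
    ∀ (l : List V) (u v : V), IsWalk E' u v l → Reach E u v := by
  intro l
  induction l with
  | nil => intro u v h; exact ⟨[], h⟩
  | cons x xs ih =>
    intro u v h
    obtain ⟨l1, h1⟩ := hR u x h.1
    obtain ⟨l2, h2⟩ := ih x v h.2
    exact ⟨l1 ++ l2, isWalk_append l1 h1 h2⟩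

lemma le_wdist {E : V → V → Prop} {w : V → V → ℝ} {u v : V}
    (hne : Reach E u v) (c : ℝ)
    (h : ∀ l, IsWalk E u v l → c ≤ wlen w u l) : c ≤ wdist E w u v := by
  obtain ⟨l0, h0⟩ := hne
  have : c ≤ sInf {r | ∃ l, IsWalk E u v l ∧ wlen w u l = r} := by
    refine le_csInf ⟨wlen w u l0, ⟨l0, h0, rfl⟩⟩ ?_
    rintro r ⟨l, hl, rfl⟩
    exact h l hl
  exact this

lemma wdist_triangle {E : V → V → Prop} {w : V → V → ℝ}
    (hw : ∀ a b, E a b → 0 ≤ w a b) {x a z : V}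
    (hxa : Reach E x a) (haz : Reach E a z) :
    wdist E w x z ≤ wdist E w x a + wdist E w a z := by
  have step : ∀ (l1 l2 : List V), IsWalk E x a l1 → IsWalk E a z l2 →
      wdist E w x z ≤ wlen w x l1 + wlen w a l2 := by
    intro l1 l2 h1 h2
    have hle := wdist_le hw (isWalk_append l1 h1 h2)
    rcases isWalk_last l1 x a h1 with ⟨rfl, rfl⟩ | ⟨t, rfl⟩
    · simpa [wlen] using hle
    · have heq := wlen_split w t x a l2
      have hle2 : wdist E w x z ≤ wlen w x (t ++ a :: l2) := by
        refine le_trans hle (le_of_eq ?_)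
        congr 1
        simp
      rw [heq] at hle2
      exact hle2
  have h1 : wdist E w x z - wdist E w x a ≤ wdist E w a z := by
    refine le_wdist haz _ ?_
    intro l2 h2
    have h3 : wdist E w x z - wlen w a l2 ≤ wdist E w x a := by
      refine le_wdist hxa _ ?_
      intro l1 h1
      have := step l1 l2 h1 h2
      linarith
    linarith
  linarith

lemma wdist_self_le {E : V → V → Prop} {w : V → V → ℝ}
    (hw : ∀ a b, E a b → 0 ≤ w a b) (x : V) : wdist E w x x ≤ 0 :=
  csInf_le (wdist_bddBelow hw x x) ⟨[], rfl, rfl⟩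

/-- Key: any walk in `E'` from `x` to `z` has `w'`-length at least `wdist E w x z`. -/
lemma wdist_le_walk {E E' : V → V → Prop} {w w' : V → V → ℝ}
    (hw : ∀ a b, E a b → 0 ≤ w a b)
    (hR : ∀ a b, E' a b → Reach E a b)
    (hge : ∀ a b, E' a b → wdist E w a b ≤ w' a b) :
    ∀ (l : List V) (x z : V), IsWalk E' x z l → wdist E w x z ≤ wlen w' x l := by
  intro l
  induction l with
  | nil =>
    intro x z h
    have : x = z := h
    subst this
    simpa [wlen] using wdist_self_le hw x
  | cons a rest ih =>
    intro x z h
    have h1 : wdist E w x a ≤ w' x a := hge x a h.1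
    have h2 : wdist E w a z ≤ wlen w' a rest := ih a z h.2
    have htri := wdist_triangle hw (hR x a h.1) (walk_reach hR rest a z h.2)
    simp only [wlen]
    linarith

lemma exists_dup {l : List V} (h : ¬ l.Nodup) :
    ∃ (x : V) (l1 l2 l3 : List V), l = l1 ++ x :: l2 ++ x :: l3 := by
  induction l with
  | nil => simp at h
  | cons a t ih =>
    by_cases ha : a ∈ t
    · obtain ⟨s, r, rfl⟩ := List.append_of_mem ha
      exact ⟨a, [], s, r, rfl⟩
    · have ht : ¬ t.Nodup := by
        intro hnd
        exact h (List.nodup_cons.mpr ⟨ha, hnd⟩)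
      obtain ⟨x, l1, l2, l3, rfl⟩ := ih ht
      exact ⟨x, a :: l1, l2, l3, rfl⟩

lemma filter_decomp {f : V → Bool} :
    ∀ (l : List V) (a : V) (f' : List V), l.filter f = a :: f' →
      ∃ l1 l2, l = l1 ++ a :: l2 ∧ l2.filter f = f' := by
  intro l
  induction l with
  | nil => intro a f' h; simp at h
  | cons x t ih =>
    intro a f' h
    by_cases hx : f x
    · rw [List.filter_cons_of_pos hx] at h
      obtain ⟨rfl, rfl⟩ : x = a ∧ t.filter f = f' := by
        constructor <;> [exact (List.cons.injEq _ _ _ _ ▸ h).1;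
          exact (List.cons.injEq _ _ _ _ ▸ h).2]
      exact ⟨[], t, rfl, rfl⟩
    · rw [List.filter_cons_of_neg (by simpa using hx)] at h
      obtain ⟨l1, l2, rfl, hf⟩ := ih a f' h
      exact ⟨x :: l1, l2, rfl, hf⟩

lemma split_head {E : V → V → Prop} {u v x : V} {p l1 l2 : List V}
    (hwalk : IsWalk E u v p) (hdec : u :: p = l1 ++ x :: l2) :
    ∃ q1, p = q1 ++ l2 ∧ IsWalk E u x q1 ∧ IsWalk E x v l2 ∧
      p.length = q1.length + l2.length ∧
      ∀ (w : V → V → ℝ) (l' : List V),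
        wlen w u (q1 ++ l') = wlen w u q1 + wlen w x l' := by
  cases l1 with
  | nil =>
    simp only [List.nil_append, List.cons.injEq] at hdec
    obtain ⟨rfl, rfl⟩ := hdec
    refine ⟨[], rfl, rfl, hwalk, by simp, ?_⟩
    intro w l'
    simp [wlen]
  | cons h t =>
    simp only [List.cons_append, List.cons.injEq] at hdec
    obtain ⟨rfl, rfl⟩ := hdec
    obtain ⟨h1, h2⟩ := isWalk_split t hwalk
    refine ⟨t ++ [x], by simp, h1, h2, by simp; omega, ?_⟩
    intro w l'
    rw [List.append_assoc]
    simp only [List.singleton_append]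
    exact wlen_split w t u x l'

end Aux

/-- Let `G` be a weighted digraph, `S ⊆ V` a set of vertices, and
`H = {(x,y) : x,y ∈ S, x ≠ y, y reachable from x}`, each edge `(x,y)` weighted
`dist_G(x,y)`. For vertices `u, v`, let `P` be a shortest `u`-`v` path in `G ∪ H`
having the minimum number of edges among all shortest `u`-`v` paths in `G ∪ H`.
Then `P` contains at most `2` vertices of `S`. -/
theorem min_hop_shortest_path_meets_clique (n : ℕ)
    (E : Fin n → Fin n → Prop) (w : Fin n → Fin n → ℝ)
    (hw : ∀ u v : Fin n, E u v → 0 < w u v)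
    (S : Finset (Fin n))
    (E' : Fin n → Fin n → Prop)
    (hE' : E' = fun a b => E a b ∨ (a ∈ S ∧ b ∈ S ∧ TC E a b))
    (w' : Fin n → Fin n → ℝ)
    (hw' : w' = fun a b =>
      if a ∈ S ∧ b ∈ S ∧ TC E a b then wdist E w a b else w a b)
    (u v : Fin n) (p : List (Fin n))
    (hwalk : IsWalk E' u v p)
    (hshort : wlen w' u p = wdist E' w' u v)
    (hmin : ∀ q : List (Fin n), IsWalk E' u v q →
      wlen w' u q = wdist E' w' u v → p.length ≤ q.length) :
    ((u :: p).toFinset.filter (· ∈ S)).card ≤ 2 := by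
  classical
  by_contra hcon
  push_neg at hcon
  have hw0 : ∀ a b, E a b → 0 ≤ w a b := fun a b h => (hw a b h).le
  have hE'R : ∀ a b : Fin n, E' a b → Reach E a b := by
    intro a b h
    rw [hE'] at h
    rcases h with h | ⟨_, _, _, hr⟩
    · exact ⟨[b], h, rfl⟩
    · exact hr
  have hw'ge : ∀ a b, E' a b → wdist E w a b ≤ w' a b := by
    intro a b h
    rw [hw']
    by_cases hc : a ∈ S ∧ b ∈ S ∧ TC E a b
    · simp only [if_pos hc]
      exact le_rfl
    · simp only [if_neg hc]
      rw [hE'] at h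
      rcases h with h | h
      · have hle : wdist E w a b ≤ wlen w a [b] :=
          wdist_le hw0 (show IsWalk E a b [b] from ⟨h, rfl⟩)
        simpa [wlen] using hle
      · exact absurd h hc
  have hw'0 : ∀ a b, E' a b → 0 ≤ w' a b := by
    intro a b h
    rw [hw']
    by_cases hc : a ∈ S ∧ b ∈ S ∧ TC E a b
    · simp only [if_pos hc]
      exact wdist_nonneg hw0 a b
    · simp only [if_neg hc]
      rw [hE'] at h
      rcases h with h | h
      · exact hw0 a b h
      · exact absurd h hc
  have key : ∀ q : List (Fin n), IsWalk E' u v q → wlen w' u q ≤ wlen w' u p →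
      q.length < p.length → False := by
    intro q hq hle hlen
    have h1 : wdist E' w' u v ≤ wlen w' u q := wdist_le hw'0 hq
    have h2 : wlen w' u q = wdist E' w' u v := le_antisymm (hle.trans hshort.le) h1
    have := hmin q hq h2
    omega
  by_cases hnd : (u :: p).Nodup
  · -- Nodup case: find three distinct S-vertices and shortcut
    have hfnd : ((u :: p).filter (· ∈ S)).Nodup := hnd.filter _
    have hlen3 : 3 ≤ ((u :: p).filter (· ∈ S)).length := by
      have h1 : ((u :: p).toFinset.filter (· ∈ S)) =
          ((u :: p).filter (· ∈ S)).toFinset := by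
        ext y
        simp
      rw [h1] at hcon
      have h2 := List.toFinset_card_le ((u :: p).filter (· ∈ S))
      omega
    obtain ⟨a, b, c, rest, hfe⟩ :
        ∃ a b c rest, (u :: p).filter (· ∈ S) = a :: b :: c :: rest := by
      rcases hfl : (u :: p).filter (· ∈ S) with _ | ⟨a, (_ | ⟨b, (_ | ⟨c, rest⟩)⟩)⟩ <;>
        rw [hfl] at hlen3 <;> simp at hlen3
      exact ⟨a, b, c, rest, rfl⟩
    rw [hfe] at hfnd
    have hac : a ≠ c := by
      simp only [List.nodup_cons, List.mem_cons] at hfnd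
      intro h
      exact hfnd.1 (Or.inr (Or.inl h))
    have haS : a ∈ S := by
      have : a ∈ (u :: p).filter (· ∈ S) := by rw [hfe]; exact List.mem_cons_self
      simpa using (List.mem_filter.mp this).2
    have hcS : c ∈ S := by
      have : c ∈ (u :: p).filter (· ∈ S) := by
        rw [hfe]; simp
      simpa using (List.mem_filter.mp this).2
    obtain ⟨l1, l2', hdec1, hfil2⟩ := filter_decomp (u :: p) a (b :: c :: rest) hfe
    obtain ⟨l2a, l2b, hdec2, hfil3⟩ := filter_decomp l2' b (c :: rest) hfil2
    have hcmem : c ∈ l2b := by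
      have : c ∈ l2b.filter (· ∈ S) := by rw [hfil3]; exact List.mem_cons_self
      exact List.mem_of_mem_filter this
    obtain ⟨l3, l4, rfl⟩ := List.append_of_mem hcmem
    have hdec : u :: p = l1 ++ a :: ((l2a ++ b :: l3) ++ c :: l4) := by
      rw [hdec1, hdec2]
      simp
    obtain ⟨q1, hpq, hq1w, haw, hplen, hwl⟩ := split_head hwalk hdec
    obtain ⟨hacw, hl4w⟩ := isWalk_split (l2a ++ b :: l3) haw
    have hreach : Reach E a c := walk_reach hE'R _ a c hacw
    have hEac : E' a c := by
      rw [hE']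
      exact Or.inr ⟨haS, hcS, hac, hreach⟩
    have hwac : w' a c = wdist E w a c := by
      rw [hw']
      exact if_pos ⟨haS, hcS, hac, hreach⟩
    have hkey : wdist E w a c ≤ wlen w' a ((l2a ++ b :: l3) ++ [c]) :=
      wdist_le_walk hw0 hE'R hw'ge _ a c hacw
    have hqwalk : IsWalk E' u v (q1 ++ c :: l4) :=
      isWalk_append q1 hq1w ⟨hEac, hl4w⟩
    have hwq : wlen w' u (q1 ++ c :: l4) =
        wlen w' u q1 + (w' a c + wlen w' c l4) := by
      rw [hwl w' (c :: l4)]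
      rfl
    have hwp : wlen w' u p =
        wlen w' u q1 + (wlen w' a ((l2a ++ b :: l3) ++ [c]) + wlen w' c l4) := by
      rw [hpq, hwl w' ((l2a ++ b :: l3) ++ c :: l4),
        wlen_split w' (l2a ++ b :: l3) a c l4]
    refine key (q1 ++ c :: l4) hqwalk ?_ ?_
    · rw [hwq, hwp, hwac]
      linarith
    · rw [hpq]
      simp
      omega
  · -- duplicate vertex case: remove a cycle
    obtain ⟨x, l1, l2, l3, hdec0⟩ := exists_dup hnd
    have hdec : u :: p = l1 ++ x :: (l2 ++ x :: l3) := by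
      rw [hdec0]; simp
    obtain ⟨q1, hpq, hq1w, hxw, hplen, hwl⟩ := split_head hwalk hdec
    obtain ⟨hxxw, hl3w⟩ := isWalk_split l2 hxw
    have hmid : 0 ≤ wlen w' x (l2 ++ [x]) := wlen_nonneg hw'0 _ x x hxxw
    have hqwalk : IsWalk E' u v (q1 ++ l3) := isWalk_append q1 hq1w hl3w
    have hwq : wlen w' u (q1 ++ l3) = wlen w' u q1 + wlen w' x l3 := hwl w' l3
    have hwp : wlen w' u p =
        wlen w' u q1 + (wlen w' x (l2 ++ [x]) + wlen w' x l3) := by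
      rw [hpq, hwl w' (l2 ++ x :: l3), wlen_split w' l2 x x l3]
    refine key (q1 ++ l3) hqwalk ?_ ?_
    · rw [hwq, hwp]
      linarith
    · rw [hpq]
      simp
      omega

end Paper
end

section
/- Let G be an n-vertex directed acyclic graph, let D, k, Δ be positive integers, and let 𝒫 be a collection of directed paths of G, each of length exactly D, such that: (a) each P ∈ 𝒫 is the unique directed path in G between its two endpoints; (b) every vertex of G lies on at most Δ paths of 𝒫; (c) for every edge e of the transitive closure G*, there is at most one path P ∈ 𝒫 such that adding e to G reduces the distance between the endpoints of P to strictly below D. Let G_k be the digraph obtained from G by replacing each vertex v by a directed path Q_v of length k and replacing each edge (u,v) of G by an edge from the last vertex of Q_u to the first vertex of Q_v. Then every set E' of edges from the transitive closure of G_k for which the diameter of G_k ∪ E' is strictly less than D·k/2 satisfies |E'| ≥ min(|𝒫|/2, |𝒫|·D/(4Δ)). -/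
namespace Paper

variable {V : Type*}

/-- `FPath R p` : `p` lists the `m+1` vertices of a directed path with `m` hops in the
digraph with edge relation `R` (distinct vertices, consecutive edges in `R`). -/
def FPath (R : V → V → Prop) {m : ℕ} (p : Fin (m + 1) → V) : Prop :=
  Function.Injective p ∧ ∀ i : Fin m, R (p i.castSucc) (p i.succ)

/-- `fLen w p` : the length (total weight) of the path `p` under edge weights `w`. -/
noncomputable def fLen (w : V → V → ℝ) {m : ℕ} (p : Fin (m + 1) → V) : ℝ :=
  ∑ i : Fin m, w (p i.castSucc) (p i.succ)

/-- A digraph is acyclic (a DAG) if it has no nonempty closed walk. -/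
def Acyclic (E : V → V → Prop) : Prop :=
  ∀ (v : V) (l : List V), IsWalk E v v l → l = []

open Classical


/-! ### auxiliary lemmas -/

lemma walk_mono {E E' : V → V → Prop} (hEE : ∀ a b, E a b → E' a b) :
    ∀ {l : List V} {u v : V}, IsWalk E u v l → IsWalk E' u v l := by
  intro l
  induction l with
  | nil => intro u v h; exact h
  | cons x xs ih => intro u v h; exact ⟨hEE _ _ h.1, ih h.2⟩

lemma walk_append {E : V → V → Prop} :
    ∀ {l m : List V} {u v w : V}, IsWalk E u v l → IsWalk E v w m → IsWalk E u w (l ++ m) := by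
  intro l
  induction l with
  | nil => intro m u v w h h'; cases h; exact h'
  | cons x xs ih => intro m u v w h h'; exact ⟨h.1, ih h.2 h'⟩

lemma reach_refl {E : V → V → Prop} (u : V) : Reach E u u := ⟨[], rfl⟩

lemma reach_trans {E : V → V → Prop} {u v w : V} (h : Reach E u v) (h' : Reach E v w) :
    Reach E u w := by
  obtain ⟨l, hl⟩ := h; obtain ⟨m, hm⟩ := h'
  exact ⟨l ++ m, walk_append hl hm⟩

lemma dist_le {E : V → V → Prop} {u v : V} {l : List V} (h : IsWalk E u v l) :
    dist E u v ≤ l.length := Nat.sInf_le ⟨l, h, rfl⟩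

lemma dist_spec {E : V → V → Prop} {u v : V} (h : Reach E u v) :
    ∃ l, IsWalk E u v l ∧ l.length = dist E u v := by
  obtain ⟨l, hl⟩ := h
  have : {k | ∃ l, IsWalk E u v l ∧ l.length = k}.Nonempty := ⟨l.length, l, hl, rfl⟩
  exact Nat.sInf_mem this

lemma mem_prefix {E : V → V → Prop} :
    ∀ {l : List V} {u v c : V}, IsWalk E u v l → c ∈ l →
      ∃ l1 l2, IsWalk E u c (l1 ++ [c]) ∧ IsWalk E c v l2 := by
  intro l
  induction l with
  | nil => intro u v c _ hc; simp at hc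
  | cons x xs ih =>
    intro u v c h hc
    rcases List.mem_cons.1 hc with rfl | hc
    · exact ⟨[], xs, ⟨h.1, rfl⟩, h.2⟩
    · obtain ⟨l1, l2, h1, h2⟩ := ih h.2 hc
      exact ⟨x :: l1, l2, ⟨h.1, h1⟩, h2⟩

lemma acyclic_nodup {E : V → V → Prop} (hacy : Acyclic E) :
    ∀ {l : List V} {u v : V}, IsWalk E u v l → (u :: l).Nodup := by
  intro l
  induction l with
  | nil => intro u v _; simp
  | cons x xs ih =>
    intro u v h
    have hx := ih h.2
    refine List.nodup_cons.2 ⟨?_, hx⟩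
    intro hu
    rcases List.mem_cons.1 hu with rfl | hu
    · exact absurd (hacy u [u] ⟨h.1, rfl⟩) (by simp)
    · obtain ⟨l1, l2, h1, _⟩ := mem_prefix h.2 hu
      exact absurd (hacy u (x :: (l1 ++ [u])) ⟨h.1, h1⟩) (by simp)


lemma walk_get {E : V → V → Prop} :
    ∀ {l : List V} {u v : V}, IsWalk E u v l → ∀ (i : ℕ) (h : i + 1 < (u :: l).length),
      E ((u :: l).get ⟨i, by omega⟩) ((u :: l).get ⟨i + 1, h⟩) := by
  intro l
  induction l with
  | nil => intro u v _ i h; simp at h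
  | cons x xs ih =>
    intro u v hw i h
    match i with
    | 0 => exact hw.1
    | Nat.succ j =>
      have := ih hw.2 j (by simpa using h)
      simpa using this

lemma walk_getLast {E : V → V → Prop} :
    ∀ {l : List V} {u v : V}, IsWalk E u v l → ∀ (h : l.length < (u :: l).length),
      (u :: l).get ⟨l.length, h⟩ = v := by
  intro l
  induction l with
  | nil => intro u v hw _; exact hw
  | cons x xs ih =>
    intro u v hw h
    have := ih hw.2 (by simp)
    simpa using this

/-- A walk in a DAG gives a FPath on its vertex list. -/
lemma walk_fpath {E : V → V → Prop} (hacy : Acyclic E) {l : List V} {u v : V}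
    (hw : IsWalk E u v l) :
    ∃ q : Fin (l.length + 1) → V, FPath E q ∧ q 0 = u ∧ q (Fin.last l.length) = v ∧
      ∀ w ∈ u :: l, ∃ i, q i = w := by
  have hlen : (u :: l).length = l.length + 1 := by simp
  refine ⟨fun i => (u :: l).get (Fin.cast hlen.symm i), ⟨?_, ?_⟩, ?_, ?_, ?_⟩
  · intro i j hij
    have hnd := (List.nodup_iff_injective_get).1 (acyclic_nodup hacy hw)
    have := hnd hij
    exact Fin.cast_injective hlen.symm this
  · intro i
    exact walk_get hw i.1 (by simp)
  · rfl
  · exact walk_getLast hw _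
  · intro w hwmem
    obtain ⟨i, hi⟩ := List.mem_iff_get.1 hwmem
    exact ⟨Fin.cast hlen i, hi⟩



lemma walk_end_mem {E : V → V → Prop} :
    ∀ {l : List V} {u v : V}, IsWalk E u v l → v ∈ u :: l := by
  intro l
  induction l with
  | nil => intro u v h; cases h; exact List.mem_cons_self
  | cons x xs ih =>
    intro u v h
    exact List.mem_cons_of_mem _ (ih h.2)

/-- The list of edges (steps) of a walk starting at `u` with vertex list `l`. -/
def stepsL : V → List V → List (V × V)
  | _, [] => []
  | u, x :: xs => (u, x) :: stepsL x xs

lemma stepsL_length : ∀ (u : V) (l : List V), (stepsL u l).length = l.length := by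
  intro u l
  induction l generalizing u with
  | nil => rfl
  | cons x xs ih => simp [stepsL, ih]

lemma stepsL_mem : ∀ {u : V} {l : List V} {s : V × V}, s ∈ stepsL u l →
    s.1 ∈ u :: l ∧ s.2 ∈ l := by
  intro u l
  induction l generalizing u with
  | nil => intro s h; simp [stepsL] at h
  | cons x xs ih =>
    intro s h
    rcases List.mem_cons.1 h with rfl | h
    · simp
    · obtain ⟨h1, h2⟩ := ih h
      exact ⟨List.mem_cons_of_mem _ h1, List.mem_cons_of_mem _ h2⟩

lemma stepsL_rel {E : V → V → Prop} : ∀ {u v : V} {l : List V}, IsWalk E u v l →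
    ∀ s ∈ stepsL u l, E s.1 s.2 := by
  intro u v l
  induction l generalizing u with
  | nil => intro _ s h; simp [stepsL] at h
  | cons x xs ih =>
    intro hw s hs
    rcases List.mem_cons.1 hs with rfl | hs
    · exact hw.1
    · exact ih hw.2 s hs

lemma stepsL_nodup : ∀ {u : V} {l : List V}, (u :: l).Nodup → (stepsL u l).Nodup := by
  intro u l
  induction l generalizing u with
  | nil => intro _; simp [stepsL]
  | cons x xs ih =>
    intro h
    refine List.nodup_cons.2 ⟨?_, ih (List.nodup_cons.1 h).2⟩
    intro hmem
    have := (stepsL_mem hmem).1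
    exact (List.nodup_cons.1 h).1 this

/-- three-way partition of a list length by mutually exclusive exhaustive predicates -/
lemma length_three_filter (P1 P2 P3 : V × V → Prop)
    (hex : ∀ s : V × V, (P1 s ∧ ¬ P2 s ∧ ¬ P3 s) ∨ (¬ P1 s ∧ P2 s ∧ ¬ P3 s) ∨
      (¬ P1 s ∧ ¬ P2 s ∧ P3 s)) :
    ∀ L : List (V × V), L.length =
      (L.filter fun s => P1 s).length + (L.filter fun s => P2 s).length +
      (L.filter fun s => P3 s).length := by
  intro L
  induction L with
  | nil => simp
  | cons x xs ih =>
    rcases hex x with ⟨h1, h2, h3⟩ | ⟨h1, h2, h3⟩ | ⟨h1, h2, h3⟩ <;>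
      simp [List.filter_cons, h1, h2, h3, ih] <;> omega


section PerPath
variable {D : ℕ} {E : V → V → Prop} (hacy : Acyclic E) (p : Fin (D + 1) → V)
  (hp : FPath E p)
  (hap : ∀ (m : ℕ) (q : Fin (m + 1) → V), FPath E q →
      q 0 = p 0 → q (Fin.last m) = p (Fin.last D) →
      ∃ hm : m = D, ∀ i : Fin (m + 1), q i = p (Fin.cast (by rw [hm]) i))

include hp in
lemma p_walk : ∀ (d i : ℕ) (hid : i + d ≤ D),
    ∃ l, IsWalk E (p ⟨i, by omega⟩) (p ⟨i + d, by omega⟩) l ∧ l.length = d := by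
  intro d
  induction d with
  | zero => intro i h; exact ⟨[], rfl, rfl⟩
  | succ d ih =>
    intro i h
    obtain ⟨l, hl, hlen⟩ := ih i (by omega)
    have hstep := hp.2 ⟨i + d, by omega⟩
    refine ⟨l ++ [p ⟨i + d + 1, by omega⟩], walk_append hl ⟨?_, rfl⟩, by simp [hlen]⟩
    exact hstep

include hacy hap in
lemma walk_len_D {l : List V} (hw : IsWalk E (p 0) (p (Fin.last D)) l) :
    l.length = D ∧ ∀ w ∈ (p 0) :: l, ∃ i, p i = w := by
  obtain ⟨q, hq, hq0, hqlast, hqmem⟩ := walk_fpath hacy hw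
  obtain ⟨hm, hqi⟩ := hap _ q hq hq0 hqlast
  refine ⟨hm, fun w hwmem => ?_⟩
  obtain ⟨i, hi⟩ := hqmem w hwmem
  exact ⟨_, (hqi i).symm.trans hi⟩

include hacy hp hap in
lemma splice {i j : Fin (D + 1)} {a b : V} (hi : p i = a) (hj : p j = b)
    {l : List V} (hw : IsWalk E a b l) : (i : ℕ) + l.length = (j : ℕ) := by
  obtain ⟨l1, hl1, hlen1⟩ := p_walk p hp i 0 (by omega)
  obtain ⟨l3, hl3, hlen3⟩ := p_walk p hp (D - (j : ℕ)) (j : ℕ) (by omega)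
  have e1 : p ⟨0, by omega⟩ = p 0 := by norm_num
  have e2 : p ⟨(0 : ℕ) + (i : ℕ), by omega⟩ = a := by
    rw [← hi]; congr 1; ext; simp
  have e3 : p ⟨(j : ℕ), by omega⟩ = b := by rw [← hj]
  have e4 : p ⟨(j : ℕ) + (D - (j : ℕ)), by omega⟩ = p (Fin.last D) := by
    congr 1; ext; simp; omega
  rw [e1, e2] at hl1; rw [e3, e4] at hl3
  have htot := walk_append (walk_append hl1 hw) hl3
  have := (walk_len_D hacy p hap htot).1
  simp [hlen1, hlen3] at this
  have hjD : (j : ℕ) ≤ D := by omega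
  omega

include hacy hp hap in
lemma dist_on_path {i j : Fin (D + 1)} {a b : V} (hi : p i = a) (hj : p j = b)
    (hr : Reach E a b) : (i : ℕ) + dist E a b = (j : ℕ) := by
  obtain ⟨l, hl, hlen⟩ := dist_spec hr
  rw [← hlen]
  exact splice hacy p hp hap hi hj hl

end PerPath

section Gadget
variable {n kk : ℕ} {E : Fin n → Fin n → Prop}
  {Ek : (Fin n × Fin (kk + 1)) → (Fin n × Fin (kk + 1)) → Prop}
  (hacy : Acyclic E)
  (hEk : Ek = fun x y =>
      (x.1 = y.1 ∧ (x.2 : ℕ) + 1 = (y.2 : ℕ)) ∨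
      (E x.1 y.1 ∧ x.2 = Fin.last kk ∧ (y.2 : ℕ) = 0))

include hEk in
lemma ek_proj : ∀ {l : List (Fin n × Fin (kk + 1))} {a b : Fin n × Fin (kk + 1)},
    IsWalk Ek a b l → Reach E a.1 b.1 := by
  intro l
  induction l with
  | nil => intro a b h; cases h; exact ⟨[], rfl⟩
  | cons x xs ih =>
    intro a b h
    have h1 := h.1
    rw [hEk] at h1
    rcases h1 with ⟨he, _⟩ | ⟨he, _, _⟩
    · exact he ▸ ih h.2
    · exact reach_trans ⟨[x.1], he, rfl⟩ (ih h.2)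

include hEk in
lemma ek_proj_strong : ∀ {l : List (Fin n × Fin (kk + 1))} {a b : Fin n × Fin (kk + 1)},
    IsWalk Ek a b l →
    (∃ m, m ≠ [] ∧ IsWalk E a.1 b.1 m) ∨ (a.1 = b.1 ∧ (a.2 : ℕ) + l.length = (b.2 : ℕ)) := by
  intro l
  induction l with
  | nil => intro a b h; cases h; exact Or.inr ⟨rfl, by simp⟩
  | cons x xs ih =>
    intro a b h
    have h1 := h.1
    rw [hEk] at h1
    rcases h1 with ⟨he, hlev⟩ | ⟨he, _, _⟩
    · rcases ih h.2 with ⟨m, hm, hmw⟩ | ⟨heq, hlen⟩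
      · exact Or.inl ⟨m, hm, he ▸ hmw⟩
      · exact Or.inr ⟨he.trans heq, by simp at hlen ⊢; omega⟩
    · rcases ih h.2 with ⟨m, hm, hmw⟩ | ⟨heq, hlen⟩
      · exact Or.inl ⟨x.1 :: m, by simp, he, hmw⟩
      · exact Or.inl ⟨[b.1], by simp, heq ▸ he, rfl⟩

include hacy hEk in
lemma ek_nocycle {l : List (Fin n × Fin (kk + 1))} {a : Fin n × Fin (kk + 1)}
    (h : IsWalk Ek a a l) : l = [] := by
  rcases ek_proj_strong hEk h with ⟨m, hm, hmw⟩ | ⟨_, hlen⟩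
  · exact absurd (hacy _ _ hmw) hm
  · cases l with
    | nil => rfl
    | cons x xs => simp at hlen

include hacy hEk in
lemma tc_ek_trans {a b c : Fin n × Fin (kk + 1)} (h1 : TC Ek a b) (h2 : TC Ek b c) :
    TC Ek a c := by
  refine ⟨?_, reach_trans h1.2 h2.2⟩
  rintro rfl
  obtain ⟨l1, hl1⟩ := h1.2
  obtain ⟨l2, hl2⟩ := h2.2
  have := ek_nocycle hacy hEk (walk_append hl1 hl2)
  rcases List.append_eq_nil_iff.1 this with ⟨rfl, rfl⟩
  exact h1.1 hl1

include hacy hEk in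
lemma addE_step_tc {E' : Finset ((Fin n × Fin (kk + 1)) × (Fin n × Fin (kk + 1)))}
    (hE' : ∀ e ∈ E', TC Ek e.1 e.2) {a b : Fin n × Fin (kk + 1)}
    (h : addE Ek E' a b) : TC Ek a b := by
  rcases h with h | h
  · refine ⟨?_, ⟨[b], h, rfl⟩⟩
    rintro rfl
    have : IsWalk Ek a a [a] := ⟨h, rfl⟩
    simpa using ek_nocycle hacy hEk this
  · exact hE' _ h

include hacy hEk in
lemma addE_acyclic {E' : Finset ((Fin n × Fin (kk + 1)) × (Fin n × Fin (kk + 1)))}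
    (hE' : ∀ e ∈ E', TC Ek e.1 e.2) : Acyclic (addE Ek E') := by
  have key : ∀ (l : List (Fin n × Fin (kk + 1))) (u v : Fin n × Fin (kk + 1)),
      IsWalk (addE Ek E') u v l → u = v ∨ TC Ek u v := by
    intro l
    induction l with
    | nil => intro u v h; exact Or.inl h
    | cons x xs ih =>
      intro u v h
      have h1 := addE_step_tc hacy hEk hE' h.1
      rcases ih x v h.2 with rfl | h2
      · exact Or.inr h1
      · exact Or.inr (tc_ek_trans hacy hEk h1 h2)
  intro v l hw
  cases l with
  | nil => rfl
  | cons x xs =>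
    exfalso
    have h1 := addE_step_tc hacy hEk hE' hw.1
    rcases key xs x v hw.2 with rfl | h2
    · exact h1.1 rfl
    · exact (tc_ek_trans hacy hEk h1 h2).1 rfl

end Gadget

section Gadget
variable {n kk D : ℕ} {E : Fin n → Fin n → Prop}
  {Ek : (Fin n × Fin (kk + 1)) → (Fin n × Fin (kk + 1)) → Prop}
  (hEk : Ek = fun x y =>
      (x.1 = y.1 ∧ (x.2 : ℕ) + 1 = (y.2 : ℕ)) ∨
      (E x.1 y.1 ∧ x.2 = Fin.last kk ∧ (y.2 : ℕ) = 0))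

include hEk in
lemma ek_climb (v : Fin n) : ∀ (d i : ℕ) (h : i + d ≤ kk),
    Reach Ek (v, ⟨i, by omega⟩) (v, ⟨i + d, by omega⟩) := by
  intro d
  induction d with
  | zero => intro i h; exact reach_refl _
  | succ d ih =>
    intro i h
    refine reach_trans (ih i (by omega)) ⟨[(v, ⟨i + d + 1, by omega⟩)], ?_, rfl⟩
    rw [hEk]; exact Or.inl ⟨rfl, rfl⟩

include hEk in
lemma ek_reach_path (p : Fin (D + 1) → Fin n) (hp : FPath E p) :
    Reach Ek (p 0, ⟨0, by omega⟩) (p (Fin.last D), Fin.last kk) := by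
  have main : ∀ (d : ℕ) (hd : d ≤ D),
      Reach Ek (p 0, ⟨0, by omega⟩) (p ⟨d, by omega⟩, ⟨0, by omega⟩) := by
    intro d
    induction d with
    | zero =>
      intro _
      have : p ⟨0, by omega⟩ = p 0 := by norm_num
      rw [this]
      exact reach_refl _
    | succ d ih =>
      intro hd
      refine reach_trans (ih (by omega)) ?_
      refine reach_trans (by simpa using ek_climb hEk (p ⟨d, by omega⟩) kk 0 (by omega)) ?_
      refine ⟨[(p ⟨d + 1, by omega⟩, ⟨0, by omega⟩)], ?_, rfl⟩
      rw [hEk]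
      refine Or.inr ⟨?_, ?_, rfl⟩
      · have := hp.2 ⟨d, by omega⟩
        exact this
      · rfl
  have h0 := main D (le_refl D)
  have h1 : (⟨D, by omega⟩ : Fin (D + 1)) = Fin.last D := rfl
  rw [h1] at h0
  refine reach_trans h0 ?_
  have h2 := ek_climb hEk (p (Fin.last D)) kk 0 (by omega)
  have h3 : (⟨0 + kk, by omega⟩ : Fin (kk + 1)) = Fin.last kk := by ext; simp
  rw [h3] at h2
  exact h2

end Gadget

section PerPath
variable {n kk D : ℕ}
  {E : Fin n → Fin n → Prop}
  {Ek : (Fin n × Fin (kk + 1)) → (Fin n × Fin (kk + 1)) → Prop}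

-- shortcut distance bound
lemma path_shortcut {D : ℕ} {E : V → V → Prop} (p : Fin (D + 1) → V) (hp : FPath E p)
    {i j : Fin (D + 1)} {a b : V} (hi : p i = a) (hj : p j = b) :
    dist (fun x y => E x y ∨ (x = a ∧ y = b)) (p 0) (p (Fin.last D)) ≤
      (i : ℕ) + 1 + (D - (j : ℕ)) := by
  obtain ⟨l1, hl1, hlen1⟩ := p_walk p hp i 0 (by omega)
  obtain ⟨l3, hl3, hlen3⟩ := p_walk p hp (D - (j : ℕ)) (j : ℕ) (by omega)
  have e1 : p ⟨0, by omega⟩ = p 0 := by norm_num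
  have e2 : p ⟨(0 : ℕ) + (i : ℕ), by omega⟩ = a := by rw [← hi]; congr 1; ext; simp
  have e3 : p ⟨(j : ℕ), by omega⟩ = b := by rw [← hj]
  have e4 : p ⟨(j : ℕ) + (D - (j : ℕ)), by omega⟩ = p (Fin.last D) := by
    congr 1; ext; simp; omega
  rw [e1, e2] at hl1; rw [e3, e4] at hl3
  set E2 : V → V → Prop := fun x y => E x y ∨ (x = a ∧ y = b) with hE2
  have hmid : IsWalk E2 a b [b] := ⟨Or.inr ⟨rfl, rfl⟩, rfl⟩
  have hmono : ∀ x y, E x y → E2 x y := fun x y h => Or.inl h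
  have := walk_append (walk_append (walk_mono hmono hl1) hmid) (walk_mono hmono hl3)
  have hd := dist_le this
  simp [hlen1, hlen3] at hd
  omega

open Classical in
noncomputable def sList (Ek : V → V → Prop) : V → List V → List (V × V)
  | _, [] => []
  | u, x :: xs => (if ¬ Ek u x then [(u, x)] else []) ++ sList Ek x xs

open Classical in
noncomputable def cCount {α β : Type*} (Ek : (α × β) → (α × β) → Prop) :
    (α × β) → List (α × β) → ℕ
  | _, [] => 0
  | u, x :: xs => (if Ek u x ∧ u.1 ≠ x.1 then 1 else 0) + cCount Ek x xs

open Classical in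
noncomputable def vCount {α β : Type*} (Ek : (α × β) → (α × β) → Prop) :
    (α × β) → List (α × β) → ℕ
  | _, [] => 0
  | u, x :: xs => (if Ek u x ∧ u.1 = x.1 then 1 else 0) + vCount Ek x xs

lemma sList_sublist_steps {Ek : V → V → Prop} :
    ∀ (u : V) (l : List V), (sList Ek u l).Sublist (stepsL u l) := by
  intro u l
  induction l generalizing u with
  | nil => simp [sList, stepsL]
  | cons x xs ih =>
    by_cases h : Ek u x <;> simp [sList, stepsL, h]
    · exact List.Sublist.cons _ (ih x)
    · exact ih x

lemma sList_not_ek {Ek : V → V → Prop} :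
    ∀ {u : V} {l : List V} {s : V × V}, s ∈ sList Ek u l → ¬ Ek s.1 s.2 := by
  intro u l
  induction l generalizing u with
  | nil => intro s h; simp [sList] at h
  | cons x xs ih =>
    intro s h
    simp only [sList, List.mem_append] at h
    rcases h with h | h
    · by_cases hek : Ek u x <;> simp [hek] at h
      subst h; simpa using hek
    · exact ih h


lemma length_partition {α β : Type*} (Ek : (α × β) → (α × β) → Prop) :
    ∀ (u : α × β) (l : List (α × β)),
      l.length = vCount Ek u l + cCount Ek u l + (sList Ek u l).length := by
  intro u l
  induction l generalizing u with
  | nil => simp [vCount, cCount, sList]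
  | cons x xs ih =>
    by_cases hek : Ek u x
    · by_cases heq : u.1 = x.1 <;>
        simp [vCount, cCount, sList, hek, heq, ih x] <;> omega
    · simp [vCount, cCount, sList, hek, ih x]; omega

lemma per_path (hkk : 1 ≤ kk) (hacy : Acyclic E)
    (hEk : Ek = fun x y =>
      (x.1 = y.1 ∧ (x.2 : ℕ) + 1 = (y.2 : ℕ)) ∨
      (E x.1 y.1 ∧ x.2 = Fin.last kk ∧ (y.2 : ℕ) = 0))
    {E' : Finset ((Fin n × Fin (kk + 1)) × (Fin n × Fin (kk + 1)))}
    (hE' : ∀ e ∈ E', TC Ek e.1 e.2)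
    (p : Fin (D + 1) → Fin n) (hp : FPath E p)
    (hap : ∀ (m : ℕ) (q : Fin (m + 1) → Fin n), FPath E q →
      q 0 = p 0 → q (Fin.last m) = p (Fin.last D) →
      ∃ hm : m = D, ∀ i : Fin (m + 1), q i = p (Fin.cast (by rw [hm]) i))
    {l : List (Fin n × Fin (kk + 1))}
    (hw : IsWalk (addE Ek E') (p 0, ⟨0, Nat.succ_pos kk⟩) (p (Fin.last D), Fin.last kk) l)
    (hlen : 2 * l.length < D * kk) :
    ∃ S : Finset ((Fin n × Fin (kk + 1)) × (Fin n × Fin (kk + 1))),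
      S ⊆ E' ∧ D + 3 ≤ 2 * ∑ e ∈ S, (dist E e.1.1 e.2.1 + 1) ∧
      ∀ e ∈ S, (∃ i, p i = e.1.1) ∧ dist E e.1.1 e.2.1 ≤ D ∧
        (2 ≤ dist E e.1.1 e.2.1 →
          dist (fun x y => E x y ∨ (x = e.1.1 ∧ y = e.2.1)) (p 0) (p (Fin.last D)) < D) := by
  set x0 : Fin n × Fin (kk + 1) := (p 0, ⟨0, Nat.succ_pos kk⟩) with hx0
  set y0 : Fin n × Fin (kk + 1) := (p (Fin.last D), Fin.last kk) with hy0
  set A : (Fin n × Fin (kk + 1)) → (Fin n × Fin (kk + 1)) → Prop := addE Ek E' with hA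
  have ekCases : ∀ {a b : Fin n × Fin (kk + 1)}, Ek a b →
      (a.1 = b.1 ∧ (a.2 : ℕ) + 1 = (b.2 : ℕ)) ∨
      (E a.1 b.1 ∧ a.2 = Fin.last kk ∧ (b.2 : ℕ) = 0) := by
    intro a b h; rw [hEk] at h; exact h
  have step_reach : ∀ a b : Fin n × Fin (kk + 1), A a b → Reach E a.1 b.1 := by
    intro a b h
    rcases h with h | h
    · rcases ekCases h with ⟨h1, _⟩ | ⟨h1, _, _⟩
      · exact h1 ▸ reach_refl _
      · exact ⟨[b.1], h1, rfl⟩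
    · obtain ⟨m, hm⟩ := (hE' _ h).2
      exact ek_proj hEk hm
  have addE_proj : ∀ (lw : List (Fin n × Fin (kk + 1))) (a b : Fin n × Fin (kk + 1)),
      IsWalk A a b lw → Reach E a.1 b.1 := by
    intro lw
    induction lw with
    | nil => intro a b h; cases h; exact reach_refl _
    | cons z zs ih => intro a b h; exact reach_trans (step_reach _ _ h.1) (ih _ _ h.2)
  have on_path : ∀ v : Fin n, Reach E (p 0) v → Reach E v (p (Fin.last D)) →
      ∃ i, p i = v := by
    intro v h1 h2
    obtain ⟨l1, hl1⟩ := h1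
    obtain ⟨l2, hl2⟩ := h2
    have hmem : v ∈ (p 0) :: (l1 ++ l2) := by
      have := walk_end_mem hl1
      rcases List.mem_cons.1 this with rfl | h
      · exact List.mem_cons_self
      · exact List.mem_cons_of_mem _ (List.mem_append_left _ h)
    exact (walk_len_D hacy p hap (walk_append hl1 hl2)).2 v hmem
  obtain ⟨F, hFspec⟩ : ∃ F : Fin n → ℕ, ∀ (i : Fin (D + 1)) (v : Fin n), p i = v →
      F v = (i : ℕ) := by
    refine ⟨fun v => if h : ∃ i : Fin (D + 1), p i = v then
      ((Classical.choose h : Fin (D + 1)) : ℕ) else 0, ?_⟩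
    intro i v hv
    have hex : ∃ j : Fin (D + 1), p j = v := ⟨i, hv⟩
    simp only [dif_pos hex]
    congr 1
    exact hp.1 ((Classical.choose_spec hex).trans hv.symm)
  -- goodness of all steps
  have hgood : ∀ (lw : List (Fin n × Fin (kk + 1))) (x : Fin n × Fin (kk + 1)),
      IsWalk A x y0 lw → Reach E (p 0) x.1 →
      ∀ s ∈ stepsL x lw, Reach E (p 0) s.1.1 ∧ Reach E s.2.1 (p (Fin.last D)) := by
    intro lw
    induction lw with
    | nil => intro x _ _ s hs; simp [stepsL] at hs
    | cons z zs ih =>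
      intro x h hx s hs
      rcases List.mem_cons.1 hs with rfl | hs
      · exact ⟨hx, addE_proj _ _ _ h.2⟩
      · exact ih z h.2 (reach_trans hx (step_reach _ _ h.1)) s hs
  -- (iii) : position counting
  have hIII : ∀ (lw : List (Fin n × Fin (kk + 1))) (x : Fin n × Fin (kk + 1)),
      IsWalk A x y0 lw → Reach E (p 0) x.1 →
      F y0.1 = F x.1 + cCount Ek x lw +
        ((sList Ek x lw).map (fun s => dist E s.1.1 s.2.1)).sum := by
    intro lw
    induction lw with
    | nil =>
      intro x h _
      cases h
      simp [cCount, sList]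
    | cons z zs ih =>
      intro x h hx
      have hxz : A x z := h.1
      have hzgood : Reach E (p 0) z.1 := reach_trans hx (step_reach _ _ hxz)
      have IH := ih z h.2 hzgood
      have hx2 : Reach E x.1 (p (Fin.last D)) :=
        reach_trans (step_reach _ _ hxz) (addE_proj _ _ _ h.2)
      have hz2 : Reach E z.1 (p (Fin.last D)) := addE_proj _ _ _ h.2
      obtain ⟨i, hi⟩ := on_path x.1 hx hx2
      obtain ⟨j, hj⟩ := on_path z.1 hzgood hz2
      by_cases hek : Ek x z
      · rcases ekCases hek with ⟨h1, _⟩ | ⟨h1, _, _⟩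
        · -- level step
          have hcc : cCount Ek x (z :: zs) = cCount Ek z zs := by
            simp [cCount, hek, h1]
          have hsl : sList Ek x (z :: zs) = sList Ek z zs := by
            simp [sList, hek]
          rw [hcc, hsl, IH, h1]
        · -- cross step
          have hne : x.1 ≠ z.1 := by
            intro heq
            have : IsWalk E x.1 x.1 [z.1] := ⟨h1, heq.symm⟩
            simpa using hacy _ _ this
          have hcc : cCount Ek x (z :: zs) = 1 + cCount Ek z zs := by
            simp [cCount, hek, hne]
          have hsl : sList Ek x (z :: zs) = sList Ek z zs := by
            simp [sList, hek]
          have hsp : (i : ℕ) + 1 = (j : ℕ) := by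
            have hr : Reach E x.1 z.1 := ⟨[z.1], h1, rfl⟩
            have := dist_on_path hacy p hp hap hi hj hr
            have hd1 : dist E x.1 z.1 ≤ 1 := dist_le (show IsWalk E x.1 z.1 [z.1] from ⟨h1, rfl⟩)
            have hd0 : dist E x.1 z.1 ≠ 0 := by
              intro h0
              obtain ⟨m, hm, hmlen⟩ := dist_spec hr
              rw [h0] at hmlen
              have hnil : m = [] := List.length_eq_zero_iff.1 hmlen
              subst hnil
              exact hne hm
            omega
          have hFi := hFspec i x.1 hi
          have hFj := hFspec j z.1 hj
          rw [hcc, hsl, hFi] at *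
          rw [IH, hFj]
          omega
      · -- shortcut step
        have hmem : (x, z) ∈ E' := by
          rcases hxz with h' | h'
          · exact absurd h' hek
          · exact h'
        have hr : Reach E x.1 z.1 := by
          obtain ⟨m, hm⟩ := (hE' _ hmem).2
          exact ek_proj hEk hm
        have hsp := dist_on_path hacy p hp hap hi hj hr
        have hcc : cCount Ek x (z :: zs) = cCount Ek z zs := by
          simp [cCount, hek]
        have hsl : sList Ek x (z :: zs) = (x, z) :: sList Ek z zs := by
          simp [sList, hek]
        rw [hcc, hsl, IH, hFspec i x.1 hi, hFspec j z.1 hj]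
        simp
        omega
  -- (ii) : level counting
  have hII : ∀ (lw : List (Fin n × Fin (kk + 1))) (x : Fin n × Fin (kk + 1)),
      IsWalk A x y0 lw →
      ((y0.2 : ℕ) : ℤ) ≤ ((x.2 : ℕ) : ℤ) + vCount Ek x lw - kk * cCount Ek x lw +
        kk * (sList Ek x lw).length := by
    intro lw
    induction lw with
    | nil =>
      intro x h
      cases h
      simp [vCount, cCount, sList]
    | cons z zs ih =>
      intro x h
      have IH := ih z h.2
      by_cases hek : Ek x z
      · rcases ekCases hek with ⟨h1, h2⟩ | ⟨h1, h2, h3⟩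
        · have hvc : vCount Ek x (z :: zs) = 1 + vCount Ek z zs := by
            simp [vCount, hek, h1]
          have hcc : cCount Ek x (z :: zs) = cCount Ek z zs := by
            simp [cCount, hek, h1]
          have hsl : sList Ek x (z :: zs) = sList Ek z zs := by
            simp [sList, hek]
          rw [hvc, hcc, hsl]
          have hz2 : ((z.2 : ℕ) : ℤ) = ((x.2 : ℕ) : ℤ) + 1 := by exact_mod_cast h2.symm
          push_cast
          push_cast at IH
          linarith
        · have hne : x.1 ≠ z.1 := by
            intro heq
            have : IsWalk E x.1 x.1 [z.1] := ⟨h1, heq.symm⟩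
            simpa using hacy _ _ this
          have hvc : vCount Ek x (z :: zs) = vCount Ek z zs := by
            simp [vCount, hek, hne]
          have hcc : cCount Ek x (z :: zs) = 1 + cCount Ek z zs := by
            simp [cCount, hek, hne]
          have hsl : sList Ek x (z :: zs) = sList Ek z zs := by
            simp [sList, hek]
          rw [hvc, hcc, hsl]
          have hx2 : ((x.2 : ℕ) : ℤ) = (kk : ℤ) := by rw [h2]; simp
          have hz2 : ((z.2 : ℕ) : ℤ) = 0 := by exact_mod_cast h3
          push_cast
          push_cast at IH
          linarith
      · have hvc : vCount Ek x (z :: zs) = vCount Ek z zs := by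
          simp [vCount, hek]
        have hcc : cCount Ek x (z :: zs) = cCount Ek z zs := by
          simp [cCount, hek]
        have hsl : sList Ek x (z :: zs) = (x, z) :: sList Ek z zs := by
          simp [sList, hek]
        rw [hvc, hcc, hsl]
        simp only [List.length_cons]
        have hz2 : ((z.2 : ℕ) : ℤ) ≤ (kk : ℤ) := by
          have := z.2.isLt; exact_mod_cast Nat.lt_succ_iff.1 this
        have hx2 : (0 : ℤ) ≤ ((x.2 : ℕ) : ℤ) := by positivity
        push_cast
        push_cast at IH
        linarith
  -- glue
  set t := (sList Ek x0 l).length with ht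
  set C := cCount Ek x0 l with hC
  set Vc := vCount Ek x0 l with hVc
  set σ := ((sList Ek x0 l).map (fun s => dist E s.1.1 s.2.1)).sum with hσ
  have hpart : l.length = Vc + C + t := length_partition Ek x0 l
  have h2 := hII l x0 hw
  have h3 := hIII l x0 hw (reach_refl _)
  have hFD : F y0.1 = D := by
    have := hFspec (Fin.last D) (p (Fin.last D)) rfl
    simpa using this
  have hF0 : F x0.1 = 0 := by
    have := hFspec 0 (p 0) rfl
    simpa using this
  have hDsum : D = C + σ := by rw [hFD, hF0] at h3; simpa using h3
  have hy2 : ((y0.2 : ℕ) : ℤ) = (kk : ℤ) := by simp [hy0]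
  have hx2 : ((x0.2 : ℕ) : ℤ) = 0 := by simp [hx0]
  rw [hy2, hx2] at h2
  have hlenZ : 2 * ((Vc : ℤ) + C + t) < ((C : ℤ) + σ) * kk := by
    have : (2 * l.length : ℤ) < (D : ℤ) * kk := by exact_mod_cast hlen
    rw [hpart, hDsum] at this
    push_cast at this
    linarith
  have hkk0 : (0 : ℤ) ≤ (kk : ℤ) := by positivity
  have hkk1 : (1 : ℤ) ≤ (kk : ℤ) := by exact_mod_cast hkk
  have hXZ : (C : ℤ) + 3 ≤ (σ : ℤ) + 2 * t := by
    by_contra hcon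
    push_neg at hcon
    have hfac : (0 : ℤ) ≤ 2 + C - 2 * t - σ := by linarith
    nlinarith [mul_nonneg hkk0 hfac, h2, hlenZ]
  have hXn : C + 3 ≤ σ + 2 * t := by exact_mod_cast hXZ
  -- the finset
  have hndvert : (x0 :: l).Nodup := acyclic_nodup (addE_acyclic hacy hEk hE') hw
  have hnd : (sList Ek x0 l).Nodup := (sList_sublist_steps x0 l).nodup (stepsL_nodup hndvert)
  refine ⟨(sList Ek x0 l).toFinset, ?_, ?_, ?_⟩
  · intro e he
    have hemem : e ∈ sList Ek x0 l := List.mem_toFinset.1 he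
    have hnek : ¬ Ek e.1 e.2 := sList_not_ek hemem
    have hestep : e ∈ stepsL x0 l := (sList_sublist_steps x0 l).subset hemem
    have hrel : A e.1 e.2 := stepsL_rel hw e hestep
    rcases hrel with h' | h'
    · exact absurd h' hnek
    · simpa using h'
  · have hsum : ∑ e ∈ (sList Ek x0 l).toFinset, (dist E e.1.1 e.2.1 + 1) =
        ((sList Ek x0 l).map (fun s => dist E s.1.1 s.2.1 + 1)).sum :=
      List.sum_toFinset _ hnd
    have hmapadd : ∀ (L : List ((Fin n × Fin (kk + 1)) × (Fin n × Fin (kk + 1)))),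
        (L.map (fun s => dist E s.1.1 s.2.1 + 1)).sum =
        (L.map (fun s => dist E s.1.1 s.2.1)).sum + L.length := by
      intro L
      induction L with
      | nil => simp
      | cons a as ihL => simp [ihL]; omega
    rw [hsum, hmapadd]
    omega
  · intro e he
    have hemem : e ∈ sList Ek x0 l := List.mem_toFinset.1 he
    have hnek : ¬ Ek e.1 e.2 := sList_not_ek hemem
    have hestep : e ∈ stepsL x0 l := (sList_sublist_steps x0 l).subset hemem
    have hrel : A e.1 e.2 := stepsL_rel hw e hestep
    have hE'mem : (e.1, e.2) ∈ E' := by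
      rcases hrel with h' | h'
      · exact absurd h' hnek
      · exact h'
    have hg := hgood l x0 hw (reach_refl _) e hestep
    have hr12 : Reach E e.1.1 e.2.1 := by
      obtain ⟨m, hm⟩ := (hE' _ hE'mem).2
      exact ek_proj hEk hm
    obtain ⟨i, hi⟩ := on_path e.1.1 hg.1 (reach_trans hr12 hg.2)
    obtain ⟨j, hj⟩ := on_path e.2.1 (reach_trans hg.1 hr12) hg.2
    have hdi := dist_on_path hacy p hp hap hi hj hr12
    have hjD : (j : ℕ) ≤ D := Nat.lt_succ_iff.1 j.isLt
    refine ⟨⟨i, hi⟩, by omega, ?_⟩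
    intro h2d
    have hps := path_shortcut p hp hi hj
    omega

end PerPath


/-- Let `G` be an `n`-vertex DAG, `D, k, Δ` positive integers, and
`Ps` a collection of directed paths of `G`, each of length exactly `D` (given as
injective vertex sequences `Fin (D+1) → Fin n` with consecutive `E`-edges), such that:
(a) each `p ∈ Ps` is the unique directed path in `G` between its endpoints;
(b) every vertex lies on at most `Δ` paths of `Ps`;
(c) for every edge `(a,b)` of `G*`, at most one path `p ∈ Ps` has its endpoint
distance reduced strictly below `D` by adding `(a,b)` to `G`.
Let `G_k` (vertices `Fin n × Fin (k+1)`, edge relation `Ek`) be obtained from `G` by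
replacing each vertex `v` by a directed path `Q_v` of length `k` and each edge `(u,v)`
by an edge from the last vertex of `Q_u` to the first vertex of `Q_v`. Then every set
`E'` of edges from the transitive closure of `G_k` for which the diameter of
`G_k ∪ E'` is strictly less than `D·k/2` satisfies
`|E'| ≥ min(|Ps|/2, |Ps|·D/(4Δ))`. -/
theorem lower_bound_gadget (n D k Δ : ℕ) (hD : 1 ≤ D) (hk : 1 ≤ k) (hΔ : 1 ≤ Δ)
    (E : Fin n → Fin n → Prop) (hacy : Acyclic E)
    (Ps : Finset (Fin (D + 1) → Fin n))
    (hpath : ∀ p ∈ Ps, FPath E p)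
    (ha : ∀ p ∈ Ps, ∀ (m : ℕ) (q : Fin (m + 1) → Fin n), FPath E q →
      q 0 = p 0 → q (Fin.last m) = p (Fin.last D) →
      ∃ hm : m = D, ∀ i : Fin (m + 1), q i = p (Fin.cast (by rw [hm]) i))
    (hb : ∀ v : Fin n, (Ps.filter (fun p => ∃ i : Fin (D + 1), p i = v)).card ≤ Δ)
    (hc : ∀ a b : Fin n, TC E a b →
      (Ps.filter (fun p =>
        dist (fun x y => E x y ∨ (x = a ∧ y = b)) (p 0) (p (Fin.last D)) < D)).card ≤ 1)
    (Ek : (Fin n × Fin (k + 1)) → (Fin n × Fin (k + 1)) → Prop)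
    (hEk : Ek = fun x y =>
      (x.1 = y.1 ∧ (x.2 : ℕ) + 1 = (y.2 : ℕ)) ∨
      (E x.1 y.1 ∧ x.2 = Fin.last k ∧ (y.2 : ℕ) = 0)) :
    ∀ E' : Finset ((Fin n × Fin (k + 1)) × (Fin n × Fin (k + 1))),
      (∀ e ∈ E', TC Ek e.1 e.2) →
      (∀ x y : Fin n × Fin (k + 1), TC Ek x y →
        (dist (addE Ek E') x y : ℝ) < (D : ℝ) * (k : ℝ) / 2) →
      min ((Ps.card : ℝ) / 2) ((Ps.card : ℝ) * (D : ℝ) / (4 * (Δ : ℝ))) ≤ (E'.card : ℝ) := by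

  intro E' hE' hdi
  -- choose a shortcut set for each path
  have hex : ∀ p : Fin (D + 1) → Fin n,
      ∃ S : Finset ((Fin n × Fin (k + 1)) × (Fin n × Fin (k + 1))), p ∈ Ps →
      S ⊆ E' ∧ D + 3 ≤ 2 * ∑ e ∈ S, (dist E e.1.1 e.2.1 + 1) ∧
      ∀ e ∈ S, (∃ i, p i = e.1.1) ∧ dist E e.1.1 e.2.1 ≤ D ∧
        (2 ≤ dist E e.1.1 e.2.1 →
          dist (fun x y => E x y ∨ (x = e.1.1 ∧ y = e.2.1)) (p 0) (p (Fin.last D)) < D) := by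
    intro p
    by_cases hmem : p ∈ Ps
    · have hp := hpath p hmem
      have hap := ha p hmem
      have hreach : Reach Ek (p 0, ⟨0, Nat.succ_pos k⟩) (p (Fin.last D), Fin.last k) :=
        ek_reach_path hEk p hp
      have hne : (p 0, (⟨0, Nat.succ_pos k⟩ : Fin (k + 1))) ≠
          (p (Fin.last D), Fin.last k) := by
        intro heq
        have h1 : p 0 = p (Fin.last D) := congrArg Prod.fst heq
        have h2 := hp.1 h1
        have h3 : (0 : ℕ) = D := congrArg Fin.val h2
        omega
      have hdist := hdi _ _ ⟨hne, hreach⟩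
      have hreachA : Reach (addE Ek E') (p 0, ⟨0, Nat.succ_pos k⟩)
          (p (Fin.last D), Fin.last k) := by
        obtain ⟨m, hm⟩ := hreach
        exact ⟨m, walk_mono (fun a b h => Or.inl h) hm⟩
      obtain ⟨l, hl, hlen⟩ := dist_spec hreachA
      have hlen2 : 2 * l.length < D * k := by
        have h1 : (2 * l.length : ℝ) < (D : ℝ) * k := by
          rw [hlen]
          push_cast
          linarith
        exact_mod_cast h1
      obtain ⟨S, hS1, hS2, hS3⟩ := per_path hk hacy hEk hE' p hp hap hl hlen2
      exact ⟨S, fun _ => ⟨hS1, hS2, hS3⟩⟩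
    · exact ⟨∅, fun h => absurd h hmem⟩
  choose S hS using hex
  -- double counting
  set M := max (2 * Δ) (D + 1) with hM
  have hA1 : Ps.card * (D + 3) ≤ 2 * ∑ p ∈ Ps, ∑ e ∈ S p, (dist E e.1.1 e.2.1 + 1) := by
    rw [Finset.mul_sum]
    calc Ps.card * (D + 3) = ∑ _p ∈ Ps, (D + 3) := by rw [Finset.sum_const, smul_eq_mul]
    _ ≤ _ := Finset.sum_le_sum (fun p hp => (hS p hp).2.1)
  have hA2 : ∑ p ∈ Ps, ∑ e ∈ S p, (dist E e.1.1 e.2.1 + 1) =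
      ∑ e ∈ E', (dist E e.1.1 e.2.1 + 1) * (Ps.filter (fun p => e ∈ S p)).card := by
    have h1 : ∀ p ∈ Ps, ∑ e ∈ S p, (dist E e.1.1 e.2.1 + 1) =
        ∑ e ∈ E', if e ∈ S p then (dist E e.1.1 e.2.1 + 1) else 0 := by
      intro p hp
      rw [Finset.sum_ite_mem]
      congr 1
      rw [Finset.inter_eq_right.2 ((hS p hp).1)]
    rw [Finset.sum_congr rfl h1, Finset.sum_comm]
    refine Finset.sum_congr rfl fun e _ => ?_
    rw [← Finset.sum_filter, Finset.sum_const, smul_eq_mul, mul_comm]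
  have hA3 : ∀ e ∈ E', (dist E e.1.1 e.2.1 + 1) * (Ps.filter (fun p => e ∈ S p)).card ≤ M := by
    intro e he
    by_cases hu : (Ps.filter (fun p => e ∈ S p)).card = 0
    · rw [hu, mul_zero]; positivity
    · obtain ⟨p0, hp0⟩ := Finset.card_ne_zero.1 hu
      have hp0Ps : p0 ∈ Ps := (Finset.mem_filter.1 hp0).1
      have hp0S : e ∈ S p0 := (Finset.mem_filter.1 hp0).2
      have hprops := (hS p0 hp0Ps).2.2 e hp0S
      by_cases hadv : dist E e.1.1 e.2.1 ≤ 1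
      · have hcard : (Ps.filter (fun p => e ∈ S p)).card ≤ Δ := by
          refine le_trans (Finset.card_le_card ?_) (hb e.1.1)
          intro p hpf
          have h1 := Finset.mem_filter.1 hpf
          exact Finset.mem_filter.2 ⟨h1.1, ((hS p h1.1).2.2 e h1.2).1⟩
        calc (dist E e.1.1 e.2.1 + 1) * (Ps.filter (fun p => e ∈ S p)).card
            ≤ 2 * Δ := Nat.mul_le_mul (by omega) hcard
        _ ≤ M := le_max_left _ _
      · push_neg at hadv
        have htc : TC E e.1.1 e.2.1 := by
          refine ⟨?_, ?_⟩
          · intro heq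
            have : dist E e.1.1 e.2.1 ≤ 0 := by
              have : IsWalk E e.1.1 e.2.1 [] := heq
              exact Nat.sInf_le ⟨[], this, rfl⟩
            omega
          · obtain ⟨m, hm⟩ := (hE' e he).2
            exact ek_proj hEk hm
        have hcard : (Ps.filter (fun p => e ∈ S p)).card ≤ 1 := by
          refine le_trans (Finset.card_le_card ?_) (hc e.1.1 e.2.1 htc)
          intro p hpf
          have h1 := Finset.mem_filter.1 hpf
          exact Finset.mem_filter.2 ⟨h1.1, ((hS p h1.1).2.2 e h1.2).2.2 (by omega)⟩
        calc (dist E e.1.1 e.2.1 + 1) * (Ps.filter (fun p => e ∈ S p)).card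
            ≤ (D + 1) * 1 := Nat.mul_le_mul (by have := hprops.2.1; omega) hcard
        _ ≤ M := by rw [mul_one]; exact le_max_right _ _
  have hkey : Ps.card * (D + 3) ≤ 2 * (E'.card * M) := by
    calc Ps.card * (D + 3) ≤ 2 * ∑ p ∈ Ps, ∑ e ∈ S p, (dist E e.1.1 e.2.1 + 1) := hA1
    _ = 2 * ∑ e ∈ E', (dist E e.1.1 e.2.1 + 1) * (Ps.filter (fun p => e ∈ S p)).card := by
        rw [hA2]
    _ ≤ 2 * (E'.card * M) := by
        have := Finset.sum_le_card_nsmul E' _ M hA3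
        simp only [smul_eq_mul] at this
        omega
  -- final real arithmetic
  have hPc : (0 : ℝ) ≤ (Ps.card : ℝ) := by positivity
  rcases le_total (D + 1) (2 * Δ) with hcase | hcase
  · have hMeq : M = 2 * Δ := max_eq_left hcase
    rw [hMeq] at hkey
    have hkeyR : (Ps.card : ℝ) * (D + 3) ≤ 4 * Δ * E'.card := by
      have := hkey
      have h2 : (Ps.card * (D + 3) : ℝ) ≤ (2 * (E'.card * (2 * Δ)) : ℝ) := by exact_mod_cast this
      linarith
    refine le_trans (min_le_right _ _) ?_
    rw [div_le_iff₀ (by positivity : (0 : ℝ) < 4 * (Δ : ℝ))]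
    have hDle : (Ps.card : ℝ) * D ≤ (Ps.card : ℝ) * (D + 3) := by nlinarith
    linarith
  · have hMeq : M = D + 1 := max_eq_right hcase
    rw [hMeq] at hkey
    have hkeyR : (Ps.card : ℝ) * (D + 3) ≤ 2 * E'.card * (D + 1) := by
      have h2 : (Ps.card * (D + 3) : ℝ) ≤ (2 * (E'.card * (D + 1)) : ℝ) := by exact_mod_cast hkey
      linarith
    refine le_trans (min_le_left _ _) ?_
    have hD1 : (0 : ℝ) < (D : ℝ) + 1 := by positivity
    have h3 : (Ps.card : ℝ) * (D + 1) ≤ 2 * E'.card * (D + 1) := by nlinarith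
    have h4 : (Ps.card : ℝ) ≤ 2 * E'.card := le_of_mul_le_mul_right (by linarith) hD1
    linarith


end Paper
end
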